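/- arXiv:1306.6674 — 2 statements merged into one kernel-verified Lean document; each statement's English description precedes it below -/
import Mathlib

section
/- For every Schwartz function φ : ℝⁿ → ℂ, the family indexed by z ∈ ℤⁿ ∖ {0} with terms c_z ∫_{ℝⁿ} e^{2πi (q⁻¹z)·x} φ(x) dx is absolutely summable, and the linear functional S_nᑫ on the Schwartz space defined by ⟨S_nᑫ, φ⟩ = ∑_{z ∈ ℤⁿ∖{0}} c_z ∫_{ℝⁿ} e^{2πi (q⁻¹z)·x} φ(x) dx is continuous with respect to the Schwartz space topology; that is, S_nᑫ is a tempered distribution on ℝⁿ. -/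
open MeasureTheory Real
open scoped BigOperators

noncomputable section

/-- The point `q z` of the lattice `q ℤⁿ`, where `q` is the diagonal matrix with
diagonal entries `qd 0, …, qd (n-1)`. -/
def latticePt (n : ℕ) (qd : Fin n → ℝ) (z : Fin n → ℤ) : EuclideanSpace ℝ (Fin n) :=
  WithLp.toLp 2 (fun j => qd j * (z j : ℝ))

/-- The term `c_z ∫ e^{2πi (q⁻¹ z)·x} φ(x) dx`, with
`c_z = -1/(4π² |q⁻¹z|² |Q|)`, `|q⁻¹z|² = ∑ (z j / q_{jj})²` and `|Q| = ∏ q_{jj}`. -/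
def fourierTerm (n : ℕ) (qd : Fin n → ℝ) (z : Fin n → ℤ)
    (φ : SchwartzMap (EuclideanSpace ℝ (Fin n)) ℂ) : ℂ :=
  ((-1 / (4 * π ^ 2 * (∑ j, ((z j : ℝ) / qd j) ^ 2) * ∏ j, qd j) : ℝ) : ℂ) *
    ∫ x : EuclideanSpace ℝ (Fin n),
      Complex.exp (2 * (π : ℂ) * Complex.I * ((∑ j, ((z j : ℝ) / qd j) * x j : ℝ) : ℂ)) * φ x

/-- frequency vector `q⁻¹ z`. -/
private def xiv (n : ℕ) (qd : Fin n → ℝ) (z : Fin n → ℤ) : EuclideanSpace ℝ (Fin n) :=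
  WithLp.toLp 2 (fun j => (z j : ℝ) / qd j)

/-- the constant `c_z`. -/
private def cz (n : ℕ) (qd : Fin n → ℝ) (z : Fin n → ℤ) : ℝ :=
  -1 / (4 * π ^ 2 * (∑ j, ((z j : ℝ) / qd j) ^ 2) * ∏ j, qd j)

private lemma fourierTerm_eq (n : ℕ) (qd : Fin n → ℝ) (z : Fin n → ℤ)
    (φ : SchwartzMap (EuclideanSpace ℝ (Fin n)) ℂ) :
    fourierTerm n qd z φ =
      ((cz n qd z : ℝ) : ℂ) * (SchwartzMap.fourierTransformCLM ℂ φ) (-(xiv n qd z)) := by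
  rw [fourierTerm, cz]
  congr 1
  rw [SchwartzMap.fourierTransformCLM_apply, SchwartzMap.fourier_coe, Real.fourier_eq']
  refine integral_congr_ae (Filter.Eventually.of_forall fun x => ?_)
  simp only [smul_eq_mul]
  congr 1
  have h1 : (inner ℝ x (-(xiv n qd z)) : ℝ) = -∑ j, x j * ((z j : ℝ) / qd j) := by
    rw [inner_neg_right]
    congr 1
    simp [PiLp.inner_apply, xiv, mul_comm]
  rw [h1]
  have h2 : (∑ j, ((z j : ℝ) / qd j) * x j) = ∑ j, x j * ((z j : ℝ) / qd j) :=
    Finset.sum_congr rfl fun j _ => mul_comm _ _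
  rw [h2]
  congr 1
  push_cast [div_eq_mul_inv]
  ring

private lemma aux_summable_int : Summable (fun m : ℤ => (1 + (m : ℝ) ^ 2)⁻¹) := by
  have h0 : Summable (fun k : ℕ => (1 + (k : ℝ) ^ 2)⁻¹) := by
    have hs : Summable (fun k : ℕ => (((k : ℝ) + 1) ^ 2)⁻¹) := by
      have h := (summable_nat_add_iff (f := fun k : ℕ => (((k : ℝ)) ^ 2)⁻¹) 1).mpr
        (Real.summable_nat_pow_inv.mpr one_lt_two)
      apply h.congr
      intro k
      push_cast
      ring
    apply (hs.mul_left 2).of_nonneg_of_le (fun k => by positivity) (fun k => ?_)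
    have h1 : (0:ℝ) < 1 + (k : ℝ) ^ 2 := by positivity
    have h2 : (0:ℝ) < ((k : ℝ) + 1) ^ 2 := by positivity
    rw [inv_eq_one_div, inv_eq_one_div, mul_one_div, div_le_div_iff₀ h1 h2]
    nlinarith [sq_nonneg ((k : ℝ) - 1)]
  exact Summable.of_nat_of_neg h0 (by simpa using h0)

private lemma aux_summable_pi (m : ℕ) :
    Summable (fun z : Fin m → ℤ => (∏ j, (1 + (z j : ℝ) ^ 2))⁻¹) := by
  induction m with
  | zero => exact Summable.of_finite
  | succ m ih =>
    have h := aux_summable_int.mul_of_nonneg ih (fun _ => by positivity)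
      (fun z => by positivity)
    refine ((Fin.consEquiv (fun _ : Fin (m + 1) => ℤ)).summable_iff).mp (h.congr fun p => ?_)
    simp only [Function.comp_apply, Fin.consEquiv_apply]
    rw [Fin.prod_univ_succ]
    simp only [Fin.cons_zero, Fin.cons_succ]
    rw [mul_inv]

private lemma term_bound (n : ℕ) (qd : Fin n → ℝ) (hqd : ∀ j, 0 < qd j)
    (z : Fin n → ℤ) (hz : z ≠ 0) (ψ : SchwartzMap (EuclideanSpace ℝ (Fin n)) ℂ) :
    ‖((cz n qd z : ℝ) : ℂ) * ψ (-(xiv n qd z))‖ ≤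
      2 ^ (2 * n) * 2 ^ n * (1 + ∑ j, qd j) ^ (2 * n + 2) / (4 * π ^ 2 * ∏ j, qd j) *
        ((Finset.Iic (2 * n, 0)).sup
          (schwartzSeminormFamily ℂ (EuclideanSpace ℝ (Fin n)) ℂ)) ψ *
        (∏ j, (1 + (z j : ℝ) ^ 2))⁻¹ := by
  have hπ := Real.pi_pos
  set M : ℝ := 1 + ∑ j, qd j with hMdef
  set P : ℝ := ∏ j, qd j with hPdef
  have hP : 0 < P := Finset.prod_pos fun j _ => hqd j
  have hM1 : (1:ℝ) ≤ M := le_add_of_nonneg_right (Finset.sum_nonneg fun j _ => (hqd j).le)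
  have hMq : ∀ j, qd j ≤ M := fun j => by
    have h1 := Finset.single_le_sum (f := qd) (fun i _ => (hqd i).le) (Finset.mem_univ j)
    rw [hMdef]; linarith
  set B : ℝ := ∑ j, (z j : ℝ) ^ 2 with hBdef
  set E : ℝ := ∑ j, ((z j : ℝ) / qd j) ^ 2 with hEdef
  obtain ⟨j0, hj0⟩ : ∃ j, z j ≠ 0 := by
    by_contra h; push_neg at h; exact hz (funext h)
  have hB1 : (1:ℝ) ≤ B := by
    have h1 : (1:ℤ) ≤ |z j0| := Int.one_le_abs hj0
    have h2 : (1:ℝ) ≤ |(z j0 : ℝ)| := by rw [← Int.cast_abs]; exact_mod_cast h1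
    have h3 : (1:ℝ) ≤ (z j0 : ℝ) ^ 2 := by nlinarith [sq_abs ((z j0 : ℝ))]
    have h4 : (z j0 : ℝ) ^ 2 ≤ ∑ i, (z i : ℝ) ^ 2 := by
      simpa using Finset.single_le_sum (f := fun i => ((z i : ℝ)) ^ 2)
        (fun i _ => sq_nonneg _) (Finset.mem_univ j0)
    rw [hBdef]; linarith
  have hBE : B ≤ M ^ 2 * E := by
    rw [hBdef, hEdef, Finset.mul_sum]
    refine Finset.sum_le_sum fun j _ => ?_
    have hq := hqd j
    have hqM := hMq j
    rw [div_pow]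
    have hq2 : qd j ^ 2 ≤ M ^ 2 := by nlinarith
    have ht : 0 ≤ (z j : ℝ) ^ 2 / qd j ^ 2 := by positivity
    rw [← mul_div_assoc, le_div_iff₀ (by positivity)]
    nlinarith [sq_nonneg ((z j : ℝ)), hq2]
  have hE : 0 < E := by nlinarith [sq_nonneg M]
  have hnorm : ‖xiv n qd z‖ ^ 2 = E := by
    rw [EuclideanSpace.norm_eq,
      Real.sq_sqrt (Finset.sum_nonneg fun j _ => by positivity)]
    rw [hEdef]
    exact Finset.sum_congr rfl fun j _ => by
      rw [Real.norm_eq_abs, sq_abs]; rfl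
  set A : ℝ := (1 + ‖xiv n qd z‖) ^ (2 * n) with hAdef
  have hA1 : 0 < A := by positivity
  have hEA : E ^ n ≤ A := by
    have h1 : ‖xiv n qd z‖ ^ 2 ≤ (1 + ‖xiv n qd z‖) ^ 2 := by
      nlinarith [norm_nonneg (xiv n qd z)]
    calc E ^ n = (‖xiv n qd z‖ ^ 2) ^ n := by rw [hnorm]
      _ ≤ ((1 + ‖xiv n qd z‖) ^ 2) ^ n := pow_le_pow_left₀ (sq_nonneg _) h1 n
      _ = A := by rw [hAdef, ← pow_mul]
  have hprodpos : 0 < ∏ j, (1 + (z j : ℝ) ^ 2) :=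
    Finset.prod_pos fun j _ => by positivity
  have hkey : ∏ j, (1 + (z j : ℝ) ^ 2) ≤ 2 ^ n * M ^ (2 * n + 2) * (E * A) := by
    have h1 : ∏ j, (1 + (z j : ℝ) ^ 2) ≤ (2 * B) ^ n := by
      calc ∏ j, (1 + (z j : ℝ) ^ 2) ≤ ∏ _j : Fin n, (2 * B) := by
            refine Finset.prod_le_prod (fun j _ => by positivity) (fun j _ => ?_)
            have h' : (z j : ℝ) ^ 2 ≤ ∑ i, (z i : ℝ) ^ 2 := by
              simpa using Finset.single_le_sum (f := fun i => ((z i : ℝ)) ^ 2)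
                (fun i _ => sq_nonneg _) (Finset.mem_univ j)
            have hB1' : (1:ℝ) ≤ ∑ i, (z i : ℝ) ^ 2 := hB1
            have : B = ∑ i, (z i : ℝ) ^ 2 := hBdef
            rw [this]; linarith
        _ = (2 * B) ^ n := by
            rw [Finset.prod_const, Finset.card_univ, Fintype.card_fin]
    have h3 : B ^ n ≤ B ^ (n + 1) := pow_le_pow_right₀ hB1 (Nat.le_succ n)
    have h4 : B ^ (n + 1) ≤ (M ^ 2 * E) ^ (n + 1) :=
      pow_le_pow_left₀ (by linarith) hBE _
    have h5 : (M ^ 2 * E) ^ (n + 1) = M ^ (2 * n + 2) * (E ^ n * E) := by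
      rw [mul_pow, ← pow_mul]; ring
    have h6 : E ^ n * E ≤ A * E := mul_le_mul_of_nonneg_right hEA hE.le
    calc ∏ j, (1 + (z j : ℝ) ^ 2) ≤ (2 * B) ^ n := h1
      _ = 2 ^ n * B ^ n := mul_pow 2 B n
      _ ≤ 2 ^ n * B ^ (n + 1) := mul_le_mul_of_nonneg_left h3 (by positivity)
      _ ≤ 2 ^ n * (M ^ 2 * E) ^ (n + 1) := mul_le_mul_of_nonneg_left h4 (by positivity)
      _ = 2 ^ n * (M ^ (2 * n + 2) * (E ^ n * E)) := by rw [h5]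
      _ ≤ 2 ^ n * (M ^ (2 * n + 2) * (A * E)) :=
          mul_le_mul_of_nonneg_left
            (mul_le_mul_of_nonneg_left h6 (by positivity)) (by positivity)
      _ = 2 ^ n * M ^ (2 * n + 2) * (E * A) := by ring
  have hcz : cz n qd z = -1 / (4 * π ^ 2 * E * P) := rfl
  have hczabs : |cz n qd z| = 1 / (4 * π ^ 2 * E * P) := by
    rw [hcz, abs_div, abs_neg, abs_one, abs_of_pos (by positivity)]
  set S : ℝ := ((Finset.Iic (2 * n, 0)).sup
    (schwartzSeminormFamily ℂ (EuclideanSpace ℝ (Fin n)) ℂ)) ψ with hSdef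
  have hS : 0 ≤ S := apply_nonneg _ _
  have hψ : ‖ψ (-(xiv n qd z))‖ ≤ 2 ^ (2 * n) * S / A := by
    have h := SchwartzMap.one_add_le_sup_seminorm_apply (𝕜 := ℂ) (m := (2 * n, 0))
      (k := 2 * n) (n := 0) le_rfl le_rfl ψ (-(xiv n qd z))
    rw [norm_neg, norm_iteratedFDeriv_zero] at h
    rw [le_div_iff₀ hA1, mul_comm]
    exact h
  have hinv : 1 / (E * A) ≤ 2 ^ n * M ^ (2 * n + 2) / ∏ j, (1 + (z j : ℝ) ^ 2) := by
    rw [div_le_div_iff₀ (by positivity) hprodpos]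
    linarith
  calc ‖((cz n qd z : ℝ) : ℂ) * ψ (-(xiv n qd z))‖
      = |cz n qd z| * ‖ψ (-(xiv n qd z))‖ := by
        rw [norm_mul, Complex.norm_real, Real.norm_eq_abs]
    _ ≤ 1 / (4 * π ^ 2 * E * P) * (2 ^ (2 * n) * S / A) := by
        rw [hczabs]
        exact mul_le_mul_of_nonneg_left hψ (by positivity)
    _ = 2 ^ (2 * n) * S / (4 * π ^ 2 * P) * (1 / (E * A)) := by ring
    _ ≤ 2 ^ (2 * n) * S / (4 * π ^ 2 * P) *
          (2 ^ n * M ^ (2 * n + 2) / ∏ j, (1 + (z j : ℝ) ^ 2)) := by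
        refine mul_le_mul_of_nonneg_left hinv ?_
        exact div_nonneg (mul_nonneg (by positivity) hS) (by positivity)
    _ = 2 ^ (2 * n) * 2 ^ n * M ^ (2 * n + 2) / (4 * π ^ 2 * P) * S *
          (∏ j, (1 + (z j : ℝ) ^ 2))⁻¹ := by ring

/-- The family defining `S_n^q` is absolutely summable against every Schwartz function,
and the resulting linear functional is continuous on the Schwartz space; i.e. `S_n^q`
is a tempered distribution. -/
theorem periodic_fundamental_solution_is_tempered_distribution
    (n : ℕ) (hn : 2 ≤ n) (qd : Fin n → ℝ) (hqd : ∀ j, 0 < qd j) :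
    (∀ φ : SchwartzMap (EuclideanSpace ℝ (Fin n)) ℂ,
        Summable fun z : {z : Fin n → ℤ // z ≠ 0} => ‖fourierTerm n qd z.1 φ‖) ∧
    ∃ T : SchwartzMap (EuclideanSpace ℝ (Fin n)) ℂ →L[ℂ] ℂ,
      ∀ φ : SchwartzMap (EuclideanSpace ℝ (Fin n)) ℂ,
        T φ = ∑' z : {z : Fin n → ℤ // z ≠ 0}, fourierTerm n qd z.1 φ := by
  have hsubsum : Summable (fun z : {z : Fin n → ℤ // z ≠ 0} =>
      (∏ j, (1 + (z.1 j : ℝ) ^ 2))⁻¹) :=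
    (aux_summable_pi n).subtype _
  have normSummable : ∀ ψ : SchwartzMap (EuclideanSpace ℝ (Fin n)) ℂ,
      Summable fun z : {z : Fin n → ℤ // z ≠ 0} =>
        ‖((cz n qd z.1 : ℝ) : ℂ) * ψ (-(xiv n qd z.1))‖ := by
    intro ψ
    refine Summable.of_nonneg_of_le (fun z => norm_nonneg _)
      (fun z => term_bound n qd hqd z.1 z.2 ψ) ?_
    exact hsubsum.mul_left _
  constructor
  · intro φ
    exact Summable.congr (normSummable (SchwartzMap.fourierTransformCLM ℂ φ))
      fun z => (congrArg norm (fourierTerm_eq n qd z.1 φ)).symm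
  · have hsummableC : ∀ ψ : SchwartzMap (EuclideanSpace ℝ (Fin n)) ℂ,
        Summable fun z : {z : Fin n → ℤ // z ≠ 0} =>
          ((cz n qd z.1 : ℝ) : ℂ) * ψ (-(xiv n qd z.1)) :=
      fun ψ => (normSummable ψ).of_norm
    refine ⟨(SchwartzMap.mkCLMtoNormedSpace
        (fun ψ => ∑' z : {z : Fin n → ℤ // z ≠ 0},
          ((cz n qd z.1 : ℝ) : ℂ) * ψ (-(xiv n qd z.1)))
        (fun f g => ?_) (fun a f => ?_) ?_).comp
        (SchwartzMap.fourierTransformCLM ℂ), fun φ => ?_⟩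
    · simp only [SchwartzMap.add_apply, mul_add]
      exact Summable.tsum_add (hsummableC f) (hsummableC g)
    · simp only [SchwartzMap.smul_apply, smul_eq_mul, RingHom.id_apply]
      rw [← tsum_mul_left]
      exact tsum_congr fun z => by ring
    · refine ⟨Finset.Iic (2 * n, 0),
        2 ^ (2 * n) * 2 ^ n * (1 + ∑ j, qd j) ^ (2 * n + 2) / (4 * π ^ 2 * ∏ j, qd j) *
          ∑' z : {z : Fin n → ℤ // z ≠ 0}, (∏ j, (1 + (z.1 j : ℝ) ^ 2))⁻¹,
        ?_, fun ψ => ?_⟩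
      · have hπ := Real.pi_pos
        have hP : (0:ℝ) < ∏ j, qd j := Finset.prod_pos fun j _ => hqd j
        have hM0 : (0:ℝ) ≤ 1 + ∑ j, qd j := by
          have : (0:ℝ) ≤ ∑ j, qd j := Finset.sum_nonneg fun j _ => (hqd j).le
          linarith
        refine mul_nonneg (div_nonneg ?_ (by positivity)) (tsum_nonneg fun z => ?_)
        · exact mul_nonneg (by positivity) (pow_nonneg hM0 _)
        · positivity
      · calc ‖∑' z : {z : Fin n → ℤ // z ≠ 0},
              ((cz n qd z.1 : ℝ) : ℂ) * ψ (-(xiv n qd z.1))‖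
            ≤ ∑' z : {z : Fin n → ℤ // z ≠ 0},
              ‖((cz n qd z.1 : ℝ) : ℂ) * ψ (-(xiv n qd z.1))‖ :=
            norm_tsum_le_tsum_norm (normSummable ψ)
          _ ≤ ∑' z : {z : Fin n → ℤ // z ≠ 0},
              2 ^ (2 * n) * 2 ^ n * (1 + ∑ j, qd j) ^ (2 * n + 2) /
                  (4 * π ^ 2 * ∏ j, qd j) *
                ((Finset.Iic (2 * n, 0)).sup
                  (schwartzSeminormFamily ℂ (EuclideanSpace ℝ (Fin n)) ℂ)) ψ *
                (∏ j, (1 + (z.1 j : ℝ) ^ 2))⁻¹ :=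
            Summable.tsum_le_tsum (fun z => term_bound n qd hqd z.1 z.2 ψ) (normSummable ψ)
              (hsubsum.mul_left _)
          _ = 2 ^ (2 * n) * 2 ^ n * (1 + ∑ j, qd j) ^ (2 * n + 2) /
                  (4 * π ^ 2 * ∏ j, qd j) *
                (∑' z : {z : Fin n → ℤ // z ≠ 0}, (∏ j, (1 + (z.1 j : ℝ) ^ 2))⁻¹) *
                ((Finset.Iic (2 * n, 0)).sup
                  (schwartzSeminormFamily ℂ (EuclideanSpace ℝ (Fin n)) ℂ)) ψ := by
            rw [tsum_mul_left]
            ring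
    · simp only [ContinuousLinearMap.comp_apply]
      exact tsum_congr fun z => (fourierTerm_eq n qd z.1 φ).symm
end
end

section
/- Let 𝕀 be a bounded open subset of ℝⁿ such that cl 𝕀 ⊆ Q and such that ℝⁿ ∖ cl 𝕀 is connected. Then the periodically perforated domain 𝕊[𝕀]⁻ = ℝⁿ ∖ ⋃_{z ∈ ℤⁿ} cl(qz + 𝕀) is an open connected subset of ℝⁿ. -/
open MeasureTheory Real
open scoped BigOperators

noncomputable section

/-- The fundamental periodicity cell `Q = ∏_j (0, q_{jj})`. -/
def cellQ (n : ℕ) (qd : Fin n → ℝ) : Set (EuclideanSpace ℝ (Fin n)) :=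
  {x | ∀ j, x j ∈ Set.Ioo 0 (qd j)}

/-- The periodically perforated domain `𝕊[𝕀]⁻ = ℝⁿ ∖ ⋃_{z ∈ ℤⁿ} cl(qz + 𝕀)`. -/
def perfDom (n : ℕ) (qd : Fin n → ℝ) (I : Set (EuclideanSpace ℝ (Fin n))) :
    Set (EuclideanSpace ℝ (Fin n)) :=
  (⋃ z : Fin n → ℤ, closure ((latticePt n qd z + ·) '' I))ᶜ

/-! ### Auxiliary definitions -/

/-- The closed box `∏_j [0, q_j]`. -/
def boxQ (n : ℕ) (qd : Fin n → ℝ) : Set (EuclideanSpace ℝ (Fin n)) :=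
  {x | ∀ j, x j ∈ Set.Icc 0 (qd j)}

/-- Coordinatewise clamping onto the closed box. -/
def clampQ (n : ℕ) (qd : Fin n → ℝ) (x : EuclideanSpace ℝ (Fin n)) :
    EuclideanSpace ℝ (Fin n) :=
  WithLp.toLp 2 (fun j => max 0 (min (x j) (qd j)))

lemma clampQ_continuous (n : ℕ) (qd : Fin n → ℝ) : Continuous (clampQ n qd) := by
  have h : Continuous fun x : Fin n → ℝ => (fun j => max 0 (min (x j) (qd j)) : Fin n → ℝ) :=
    continuous_pi fun j =>
      Continuous.max continuous_const ((continuous_apply j).min continuous_const)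
  exact (PiLp.continuous_toLp 2 (fun _ : Fin n => ℝ)).comp
    (h.comp (PiLp.continuous_ofLp 2 (fun _ : Fin n => ℝ)))

lemma clampQ_mem_box (n : ℕ) (qd : Fin n → ℝ) (hqd : ∀ j, 0 < qd j) (x : EuclideanSpace ℝ (Fin n)) :
    clampQ n qd x ∈ boxQ n qd := by
  intro j
  constructor
  · exact le_max_left (0:ℝ) _
  · simp only [clampQ, PiLp.toLp_apply, max_le_iff]
    exact ⟨(hqd j).le, min_le_right _ _⟩

lemma clampQ_of_mem_box {n : ℕ} {qd : Fin n → ℝ} {x : EuclideanSpace ℝ (Fin n)}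
    (hx : x ∈ boxQ n qd) : clampQ n qd x = x := by
  ext j
  have h := hx j
  simp only [clampQ, PiLp.toLp_apply]
  rw [min_eq_left h.2, max_eq_right h.1]

lemma coord_abs_le_dist {n : ℕ} (x y : EuclideanSpace ℝ (Fin n)) (j : Fin n) :
    |x j - y j| ≤ dist x y := by
  rw [EuclideanSpace.dist_eq]
  have h1 : |x j - y j| = Real.sqrt (dist (x j) (y j) ^ 2) := by
    rw [Real.sqrt_sq_eq_abs, Real.dist_eq, abs_abs]
  rw [h1]
  apply Real.sqrt_le_sqrt
  apply Finset.single_le_sum (f := fun i => dist (x i) (y i) ^ 2)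
    (fun i _ => sq_nonneg _) (Finset.mem_univ j)

section Main

variable {n : ℕ} {qd : Fin n → ℝ} {I : Set (EuclideanSpace ℝ (Fin n))}

/-- Translation homeomorphism by the lattice point `q z`. -/
def transZ (n : ℕ) (qd : Fin n → ℝ) (z : Fin n → ℤ) :
    EuclideanSpace ℝ (Fin n) ≃ₜ EuclideanSpace ℝ (Fin n) :=
  Homeomorph.addLeft (latticePt n qd z)

lemma transZ_apply (z : Fin n → ℤ) (x : EuclideanSpace ℝ (Fin n)) :
    transZ n qd z x = latticePt n qd z + x := rfl

lemma image_transZ (z : Fin n → ℤ) (S : Set (EuclideanSpace ℝ (Fin n))) :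
    (latticePt n qd z + ·) '' S = transZ n qd z '' S := rfl

lemma closure_image_transZ (z : Fin n → ℤ) (S : Set (EuclideanSpace ℝ (Fin n))) :
    closure ((latticePt n qd z + ·) '' S) = (latticePt n qd z + ·) '' closure S := by
  rw [image_transZ, image_transZ, (transZ n qd z).image_closure]

/-- A point is in only one (closed/open) cell: uniqueness of the lattice translate. -/
lemma cell_unique (hqd : ∀ j, 0 < qd j) {x : EuclideanSpace ℝ (Fin n)} {z w : Fin n → ℤ}
    (hz : x - latticePt n qd z ∈ cellQ n qd)
    (hw : x - latticePt n qd w ∈ boxQ n qd) : z = w := by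
  funext j
  have hzj := hz j
  have hwj := hw j
  have hsub : ∀ (v : Fin n → ℤ), (x - latticePt n qd v) j = x j - qd j * (v j : ℝ) := fun v => by simp [latticePt]
  rw [hsub] at hzj hwj
  have h1 : qd j * (z j : ℝ) < qd j * ((w j : ℝ) + 1) := by
    have := hzj.1; have := hwj.2; nlinarith [hqd j]
  have h2 : qd j * (w j : ℝ) < qd j * ((z j : ℝ) + 1) := by
    have := hzj.2; have := hwj.1; nlinarith [hqd j]
  have h1' : (z j : ℝ) < (w j : ℝ) + 1 := lt_of_mul_lt_mul_left h1 (hqd j).le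
  have h2' : (w j : ℝ) < (z j : ℝ) + 1 := lt_of_mul_lt_mul_left h2 (hqd j).le
  have h1'' : z j < w j + 1 := by exact_mod_cast h1'
  have h2'' : w j < z j + 1 := by exact_mod_cast h2'
  omega

/-- The building block: translate of `box \ closure I`. -/
def pieceZ (n : ℕ) (qd : Fin n → ℝ) (I : Set (EuclideanSpace ℝ (Fin n))) (z : Fin n → ℤ) :
    Set (EuclideanSpace ℝ (Fin n)) :=
  (latticePt n qd z + ·) '' (boxQ n qd \ closure I)

lemma perfDom_eq_iUnion (hqd : ∀ j, 0 < qd j) (hIQ : closure I ⊆ cellQ n qd) :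
    perfDom n qd I = ⋃ z, pieceZ n qd I z := by
  ext x
  simp only [perfDom, Set.mem_compl_iff, Set.mem_iUnion, not_exists, pieceZ]
  constructor
  · intro h
    set z : Fin n → ℤ := fun j => ⌊x j / qd j⌋ with hzdef
    refine ⟨z, x - latticePt n qd z, ⟨?_, ?_⟩, add_sub_cancel _ _⟩
    · intro j
      have h1 : (z j : ℝ) ≤ x j / qd j := Int.floor_le _
      have h2 : x j / qd j < (z j : ℝ) + 1 := Int.lt_floor_add_one _
      have hq := hqd j
      have e : (x - latticePt n qd z) j = x j - qd j * (z j : ℝ) := by simp [latticePt]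
      rw [e]
      constructor
      · nlinarith [(le_div_iff₀ hq).mp h1]
      · nlinarith [(div_lt_iff₀ hq).mp h2]
    · intro hmem
      apply h z
      rw [closure_image_transZ]
      exact ⟨x - latticePt n qd z, hmem, add_sub_cancel _ _⟩
  · rintro ⟨z, b, hb, rfl⟩ w
    rw [closure_image_transZ]
    rintro ⟨c, hc, hcx⟩
    change latticePt n qd w + c = latticePt n qd z + b at hcx
    have hcell : (latticePt n qd z + b) - latticePt n qd w ∈ cellQ n qd := by
      rw [← hcx]; simpa using hIQ hc
    have hbox : (latticePt n qd z + b) - latticePt n qd z ∈ boxQ n qd := by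
      simpa using hb.1
    have hwz : w = z := cell_unique hqd hcell hbox
    subst hwz
    have : c = b := by
      have : latticePt n qd w + c = latticePt n qd w + b := hcx
      exact add_left_cancel this
    exact hb.2 (this ▸ hc)

lemma piece_connected (hqd : ∀ j, 0 < qd j) (hIQ : closure I ⊆ cellQ n qd)
    (hIc : IsConnected (closure I)ᶜ) (z : Fin n → ℤ) : IsConnected (pieceZ n qd I z) := by
  have hB : boxQ n qd \ closure I = clampQ n qd '' (closure I)ᶜ := by
    ext x
    constructor
    · rintro ⟨hx1, hx2⟩
      exact ⟨x, hx2, clampQ_of_mem_box hx1⟩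
    · rintro ⟨y, hy, rfl⟩
      refine ⟨clampQ_mem_box n qd hqd y, ?_⟩
      by_cases hyb : y ∈ boxQ n qd
      · rw [clampQ_of_mem_box hyb]; exact hy
      · intro hmem
        have hcell := hIQ hmem
        simp only [boxQ, Set.mem_setOf_eq, Set.mem_Icc] at hyb
        push_neg at hyb
        obtain ⟨j, hj⟩ := hyb
        have hcj := hcell j
        by_cases h0 : 0 ≤ y j
        · have hgt : qd j < y j := hj h0
          have : clampQ n qd y j = qd j := by
            simp only [clampQ]
            rw [min_eq_right hgt.le, max_eq_right (hqd j).le]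
          rw [this] at hcj
          exact absurd hcj.2 (lt_irrefl _)
        · push_neg at h0
          have : clampQ n qd y j = 0 := by
            simp only [clampQ]
            rw [min_eq_left (by linarith [hqd j] : y j ≤ qd j), max_eq_left h0.le]
          rw [this] at hcj
          exact absurd hcj.1 (lt_irrefl _)
  have hBconn : IsConnected (boxQ n qd \ closure I) := by
    rw [hB]
    exact hIc.image _ (clampQ_continuous n qd).continuousOn
  exact hBconn.image _ (continuous_const.add continuous_id).continuousOn

/-- The unit vector `q_j e_j` as a point of Euclidean space. -/
def edgeVec (n : ℕ) (qd : Fin n → ℝ) (j : Fin n) : EuclideanSpace ℝ (Fin n) :=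
  WithLp.toLp 2 (fun k => if k = j then qd k else 0)

lemma piece_adjacent (hqd : ∀ j, 0 < qd j) (hIQ : closure I ⊆ cellQ n qd)
    (z : Fin n → ℤ) (j : Fin n) :
    (pieceZ n qd I z ∩ pieceZ n qd I (Function.update z j (z j + 1))).Nonempty := by
  set w := Function.update z j (z j + 1) with hw
  refine ⟨latticePt n qd w, ⟨edgeVec n qd j, ⟨?_, ?_⟩, ?_⟩, ⟨0, ⟨?_, ?_⟩, by simp⟩⟩
  · intro k
    simp only [edgeVec, PiLp.toLp_apply]
    by_cases hk : k = j <;> simp [hk, (hqd k).le, (hqd j).le]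
  · intro hmem
    have h := hIQ hmem j
    simp only [edgeVec, PiLp.toLp_apply, if_pos rfl] at h
    exact absurd h.2 (lt_irrefl _)
  · ext k
    show qd k * (z k : ℝ) + edgeVec n qd j k = qd k * ((w k : ℤ) : ℝ)
    by_cases hk : k = j
    · subst hk
      simp only [edgeVec, if_pos rfl, hw, Function.update_self]
      push_cast; ring
    · simp only [edgeVec, if_neg hk, hw, Function.update_of_ne hk, add_zero]
  · intro k
    constructor <;> simp [(hqd k).le]
  · intro hmem
    have h := hIQ hmem j
    have h0 : (0 : EuclideanSpace ℝ (Fin n)) j = 0 := rfl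
    rw [h0] at h
    exact absurd h.1 (lt_irrefl _)

lemma piece_chain (hqd : ∀ j, 0 < qd j) (hIQ : closure I ⊆ cellQ n qd) (hn : 0 < n)
    (z : Fin n → ℤ) :
    Relation.ReflTransGen
      (fun a b => (pieceZ n qd I a ∩ pieceZ n qd I b).Nonempty) z (fun _ => 0) := by
  set R := fun a b : Fin n → ℤ => (pieceZ n qd I a ∩ pieceZ n qd I b).Nonempty with hR
  have hsymm : ∀ a b, R a b → R b a := by
    intro a b ⟨x, hx1, hx2⟩; exact ⟨x, hx2, hx1⟩
  suffices h : ∀ N : ℕ, ∀ z : Fin n → ℤ, (∑ j, (z j).natAbs) = N →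
      Relation.ReflTransGen R z (fun _ => 0) by
    exact h _ z rfl
  intro N
  induction N using Nat.strong_induction_on with
  | _ N ih =>
    intro z hz
    by_cases h0 : z = fun _ => 0
    · rw [h0]
    · have : ∃ j, z j ≠ 0 := by
        by_contra hc
        push_neg at hc
        exact h0 (funext fun j => hc j)
      obtain ⟨j, hj⟩ := this
      rcases lt_or_gt_of_ne hj with hneg | hpos
      · -- z j < 0 : step to w = update z j (z j + 1)
        set w := Function.update z j (z j + 1) with hwdef
        have hstep : R z w := piece_adjacent hqd hIQ z j
        have hsum : (∑ k, (w k).natAbs) < N := by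
          have h1 : (∑ k, (w k).natAbs)
              = (z j + 1).natAbs + ∑ k ∈ Finset.univ \ {j}, (z k).natAbs := by
            rw [hwdef]
            rw [show (fun k => (Function.update z j (z j + 1) k).natAbs)
                = Function.update (fun k => (z k).natAbs) j (z j + 1).natAbs by
              funext k
              by_cases hk : k = j
              · subst hk; simp
              · simp [hk]]
            exact Finset.sum_update_of_mem (Finset.mem_univ j) _ _
          rw [← Finset.erase_eq] at h1
          rw [h1]
          have hz' : N = (z j).natAbs + ∑ k ∈ Finset.univ.erase j, (z k).natAbs := by
            rw [← hz]
            exact (Finset.add_sum_erase _ _ (Finset.mem_univ j)).symm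
          omega
        exact Relation.ReflTransGen.head hstep (ih _ hsum w rfl)
      · -- z j > 0 : step to w = update z j (z j - 1); then update w j (w j + 1) = z
        set w := Function.update z j (z j - 1) with hwdef
        have hupd : Function.update w j (w j + 1) = z := by
          funext k
          by_cases hk : k = j
          · subst hk; simp [hwdef]
          · simp [hwdef, hk]
        have hstep : R w z := by
          have := piece_adjacent hqd hIQ (I := I) w j
          rwa [hupd] at this
        have hsum : (∑ k, (w k).natAbs) < N := by
          have h1 : (∑ k, (w k).natAbs)
              = (z j - 1).natAbs + ∑ k ∈ Finset.univ \ {j}, (z k).natAbs := by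
            rw [hwdef]
            rw [show (fun k => (Function.update z j (z j - 1) k).natAbs)
                = Function.update (fun k => (z k).natAbs) j (z j - 1).natAbs by
              funext k
              by_cases hk : k = j
              · subst hk; simp
              · simp [hk]]
            exact Finset.sum_update_of_mem (Finset.mem_univ j) _ _
          rw [← Finset.erase_eq] at h1
          rw [h1]
          have hz' : N = (z j).natAbs + ∑ k ∈ Finset.univ.erase j, (z k).natAbs := by
            rw [← hz]
            exact (Finset.add_sum_erase _ _ (Finset.mem_univ j)).symm
          omega
        exact Relation.ReflTransGen.head (hsymm _ _ hstep) (ih _ hsum w rfl)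

lemma perfDom_isOpen (hqd : ∀ j, 0 < qd j) (hIQ : closure I ⊆ cellQ n qd) :
    IsOpen (perfDom n qd I) := by
  rw [perfDom, isOpen_compl_iff]
  apply LocallyFinite.isClosed_iUnion
  · intro x
    refine ⟨Metric.ball x 1, Metric.ball_mem_nhds x one_pos, ?_⟩
    apply Set.Finite.subset
      (Set.Finite.pi (fun j => Set.finite_Icc (⌈(x j - 1 - qd j) / qd j⌉) (⌊(x j + 1) / qd j⌋)))
    rintro z ⟨y, hy1, hy2⟩
    change y ∈ closure ((latticePt n qd z + ·) '' I) at hy1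
    rw [closure_image_transZ] at hy1
    obtain ⟨c, hc, rfl⟩ := hy1
    have hcell := hIQ hc
    intro j _
    have hcj := hcell j
    have hdist : |(latticePt n qd z + c) j - x j| < 1 := by
      have := coord_abs_le_dist (latticePt n qd z + c) x j
      calc |(latticePt n qd z + c) j - x j| ≤ dist (latticePt n qd z + c) x := this
        _ < 1 := by rwa [← Metric.mem_ball]
    have he : (latticePt n qd z + c) j = qd j * (z j : ℝ) + c j := by simp [latticePt]
    rw [he, abs_lt] at hdist
    have hq := hqd j
    constructor
    · rw [Int.ceil_le]
      rw [div_le_iff₀ hq, mul_comm]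
      nlinarith [hcj.2, hdist.1]
    · rw [Int.le_floor]
      rw [le_div_iff₀ hq, mul_comm]
      nlinarith [hcj.1, hdist.2]
  · intro z
    exact isClosed_closure

/-- If `𝕀` is bounded open with `cl 𝕀 ⊆ Q` and connected exterior `ℝⁿ ∖ cl 𝕀`, then the
periodically perforated domain `𝕊[𝕀]⁻` is an open connected subset of `ℝⁿ`. -/
theorem perforated_domain_open_connected
    (n : ℕ) (hn : 2 ≤ n) (qd : Fin n → ℝ) (hqd : ∀ j, 0 < qd j)
    (I : Set (EuclideanSpace ℝ (Fin n)))
    (hIo : IsOpen I) (hIb : Bornology.IsBounded I)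
    (hIQ : closure I ⊆ cellQ n qd)
    (hIc : IsConnected (closure I)ᶜ) :
    IsOpen (perfDom n qd I) ∧ IsConnected (perfDom n qd I) := by
  refine ⟨perfDom_isOpen hqd hIQ, ?_⟩
  rw [perfDom_eq_iUnion hqd hIQ]
  apply IsConnected.iUnion_of_reflTransGen
  · exact fun z => piece_connected hqd hIQ hIc z
  · intro i j
    have hi := piece_chain hqd hIQ (by omega : 0 < n) i
    have hj := piece_chain hqd hIQ (by omega : 0 < n) j
    have hsymm : Symmetric fun a b : Fin n → ℤ =>
        (pieceZ n qd I a ∩ pieceZ n qd I b).Nonempty := by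
      intro a b ⟨x, hx1, hx2⟩; exact ⟨x, hx2, hx1⟩
    exact hi.trans (@Std.Symm.symm _ _ (@Relation.ReflTransGen.stdSymm _ _ ⟨hsymm⟩) _ _ hj)

end Main

end
end
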